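/- Let E := EuclideanSpace ℝ (Fin 3) and let φ : E → ℝ be cone-smooth, i.e. φ(y) = f(y) + ‖y‖·g(y) for all y with f, g : E → ℝ of class C^∞, and assume φ(0) = 0. Then the function y ↦ ∫₀¹ t⁻¹·φ(t • y) dt is cone-smooth: there exist C^∞ functions f₁, g₁ : E → ℝ with ∫₀¹ t⁻¹·φ(t • y) dt = f₁(y) + ‖y‖·g₁(y) for all y ∈ E. -/

import Mathlib

set_option maxHeartbeats 1000000
set_option synthInstance.maxHeartbeats 100000

open MeasureTheory intervalIntegral Set Filter
noncomputable section

abbrev E3 := EuclideanSpace ℝ (Fin 3)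

lemma log_intervalIntegrable : IntervalIntegrable Real.log MeasureTheory.volume 0 1 := by
  rw [intervalIntegrable_iff, uIoc_of_le zero_le_one]
  have hint : IntegrableOn (fun t : ℝ => 2 * t ^ (-(1:ℝ)/2)) (Ioc 0 1) volume := by
    have := (intervalIntegrable_rpow' (a := 0) (b := 1) (r := -(1:ℝ)/2) (by norm_num))
    rw [intervalIntegrable_iff, uIoc_of_le zero_le_one] at this
    exact this.const_mul 2
  refine Integrable.mono' hint Real.measurable_log.aestronglyMeasurable ?_
  refine (ae_restrict_iff' measurableSet_Ioc).2 (Filter.Eventually.of_forall ?_)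
  intro t ht
  have ht0 : 0 < t := ht.1
  have h1 : |Real.log t| = -Real.log t := by
    rw [abs_of_nonpos (Real.log_nonpos ht0.le ht.2)]
  rw [Real.norm_eq_abs, h1]
  have h2 : -Real.log t = 2 * Real.log (t ^ (-(1:ℝ)/2)) := by
    rw [Real.log_rpow ht0]; ring
  rw [h2]
  have h3 : Real.log (t ^ (-(1:ℝ)/2)) ≤ t ^ (-(1:ℝ)/2) := by
    have := Real.add_one_le_exp (Real.log (t ^ (-(1:ℝ)/2)))
    nlinarith [Real.exp_log (Real.rpow_pos_of_pos ht0 (-(1:ℝ)/2)), Real.log_le_sub_one_of_pos (Real.rpow_pos_of_pos ht0 (-(1:ℝ)/2))]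
  nlinarith

lemma integ_aux {F : Type} [NormedAddCommGroup F] [NormedSpace ℝ F] {c : ℝ → ℝ}
    (hc : IntervalIntegrable c volume 0 1) {v : ℝ → F} (hv : Continuous v) :
    IntervalIntegrable (fun t => c t • v t) volume 0 1 := by
  rw [intervalIntegrable_iff, uIoc_of_le zero_le_one] at hc ⊢
  obtain ⟨M, hM⟩ := (isCompact_Icc (a := (0:ℝ)) (b := 1)).exists_bound_of_continuousOn
    hv.continuousOn
  refine Integrable.mono' (hc.abs.mul_const M)
    (hc.aestronglyMeasurable.smul hv.aestronglyMeasurable) ?_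
  refine (ae_restrict_iff' measurableSet_Ioc).2 (Filter.Eventually.of_forall fun t ht => ?_)
  rw [norm_smul]
  have := hM t ⟨ht.1.le, ht.2⟩
  have : ‖v t‖ ≤ M := this
  simpa [Real.norm_eq_abs, abs_abs] using
    mul_le_mul_of_nonneg_left this (abs_nonneg (c t))

lemma key_deriv {F : Type} [NormedAddCommGroup F] [NormedSpace ℝ F] [CompleteSpace F]
    {c : ℝ → ℝ} (hc : IntervalIntegrable c volume 0 1) {h : E3 → F}
    (hh : ContDiff ℝ (⊤:ℕ∞) h) (x₀ : E3) :
    HasFDerivAt (fun y : E3 => ∫ t in (0:ℝ)..1, c t • h (t • y))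
      (∫ t in (0:ℝ)..1, (c t * t) • fderiv ℝ h (t • x₀)) x₀ := by
  have hc' : AEStronglyMeasurable c (volume.restrict (Set.uIoc (0:ℝ) 1)) := by
    rw [intervalIntegrable_iff] at hc; exact hc.aestronglyMeasurable
  have hhc : Continuous h := hh.continuous
  have hD : Continuous (fderiv ℝ h) := (hh.fderiv_right (m := (⊤:ℕ∞)) (by rw [ENat.coe_top_add_one])).continuous
  set R : ℝ := ‖x₀‖ + 1 with hR
  obtain ⟨M, hM⟩ := (isCompact_closedBall (0:E3) R).exists_bound_of_continuousOn
    hD.continuousOn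
  have hM0 : 0 ≤ M := le_trans (norm_nonneg _) (hM 0 (by simp [hR]; positivity))
  apply
    (intervalIntegral.hasFDerivAt_integral_of_dominated_of_fderiv_le (𝕜 := ℝ)
      (F := fun (x : E3) (t : ℝ) => c t • h (t • x))
      (F' := fun (x : E3) (t : ℝ) => (c t * t) • fderiv ℝ h (t • x))
      (bound := fun t => |c t| * M) (s := Metric.ball x₀ 1) (Metric.ball_mem_nhds x₀ one_pos) ?_ ?_ ?_ ?_ ?_ ?_)
  · refine Filter.Eventually.of_forall fun x => hc'.smul ?_
    exact (Continuous.aestronglyMeasurable (by fun_prop))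
  · exact integ_aux hc (hhc.comp (continuous_id.smul continuous_const))
  · haveI : SecondCountableTopologyEither ℝ (E3 →L[ℝ] F) :=
      secondCountableTopologyEither_of_left ℝ _
    refine (hc'.mul aestronglyMeasurable_id).smul ?_
    exact (Continuous.aestronglyMeasurable (by fun_prop))
  · refine Filter.Eventually.of_forall fun t ht x hx => ?_
    rw [uIoc_of_le zero_le_one] at ht
    have ht0 : 0 < t := ht.1
    have ht1 : t ≤ 1 := ht.2
    have hxR : ‖t • x‖ ≤ R := by
      rw [norm_smul, Real.norm_eq_abs, abs_of_pos ht0]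
      have hxn : ‖x‖ ≤ R := by
        have := mem_ball_iff_norm.1 hx
        calc ‖x‖ ≤ ‖x₀‖ + ‖x - x₀‖ := by
              simpa [add_comm] using norm_add_le (x - x₀) x₀
          _ ≤ R := by rw [hR]; linarith [(mem_ball_iff_norm.1 hx).le]
      nlinarith [norm_nonneg x]
    have hnorm : ‖fderiv ℝ h (t • x)‖ ≤ M := hM _ (mem_closedBall_zero_iff.2 hxR)
    have heq : ‖(c t * t) • fderiv ℝ h (t • x)‖ = |c t| * t * ‖fderiv ℝ h (t • x)‖ := by
      rw [norm_smul (c t * t) (fderiv ℝ h (t • x)), Real.norm_eq_abs, abs_mul, abs_of_pos ht0]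
    show ‖(c t * t) • fderiv ℝ h (t • x)‖ ≤ |c t| * M
    rw [heq, mul_assoc]
    have h4 : t * ‖fderiv ℝ h (t • x)‖ ≤ M := by
      nlinarith [norm_nonneg (fderiv ℝ h (t • x))]
    exact mul_le_mul_of_nonneg_left h4 (abs_nonneg _)
  · exact (hc.abs.mul_const M)
  · refine Filter.Eventually.of_forall fun t ht x hx => ?_
    have h1 : HasFDerivAt (fun y : E3 => t • y) ((t : ℝ) • ContinuousLinearMap.id ℝ E3) x :=
      (hasFDerivAt_id x).const_smul t
    have h2 : HasFDerivAt h (fderiv ℝ h (t • x)) (t • x) :=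
      (hh.differentiable (by simp) (t • x)).hasFDerivAt
    have h3 := (h2.comp x h1).const_smul (c t)
    convert h3 using 1
    ext v
    simp only [ContinuousLinearMap.smul_apply, ContinuousLinearMap.coe_comp',
      Function.comp_apply, ContinuousLinearMap.coe_smul', Pi.smul_apply,
      ContinuousLinearMap.coe_id', id_eq]
    simp [smul_smul]

lemma contDiff_key (n : ℕ) :
    ∀ {F : Type} [NormedAddCommGroup F] [NormedSpace ℝ F] [CompleteSpace F]
      (c : ℝ → ℝ) (h : E3 → F), IntervalIntegrable c volume 0 1 → ContDiff ℝ (⊤:ℕ∞) h →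
      ContDiff ℝ (n : ℕ∞) (fun y : E3 => ∫ t in (0:ℝ)..1, c t • h (t • y)) := by
  induction n with
  | zero =>
    intro F _ _ _ c h hc hh
    exact contDiff_zero.2 (continuous_iff_continuousAt.2
      fun x => (key_deriv hc hh x).differentiableAt.continuousAt)
  | succ n ih =>
    intro F _ _ _ c h hc hh
    have hcast : ((n + 1 : ℕ) : ℕ∞) = (n : ℕ∞) + 1 := by push_cast; rfl
    rw [hcast]
    have : (((n : ℕ∞) + 1 : ℕ∞) : WithTop ℕ∞) = ((n : ℕ∞) : WithTop ℕ∞) + 1 := by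
      push_cast; rfl
    rw [this, contDiff_succ_iff_fderiv]
    refine ⟨fun x => (key_deriv hc hh x).differentiableAt, by simp, ?_⟩
    have hfd : (fderiv ℝ fun y : E3 => ∫ t in (0:ℝ)..1, c t • h (t • y)) =
        fun y : E3 => ∫ t in (0:ℝ)..1, (c t * t) • fderiv ℝ h (t • y) := by
      funext y
      exact (key_deriv hc hh y).fderiv
    rw [hfd]
    exact ih (fun t => c t * t) (fderiv ℝ h)
      (hc.mul_continuousOn continuousOn_id)
      (hh.fderiv_right (by rw [ENat.coe_top_add_one]))

lemma bound_of_deriv (u : ℝ → ℝ) (hu : ContDiff ℝ (⊤:ℕ∞) u) (hu0 : u 0 = 0) :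
    ∃ C : ℝ, 0 ≤ C ∧ (∀ t ∈ Icc (0:ℝ) 1, |deriv u t| ≤ C) ∧
      ∀ t ∈ Icc (0:ℝ) 1, |u t| ≤ C * t := by
  have hcd : Continuous (deriv u) := hu.continuous_deriv (by exact_mod_cast le_top)
  obtain ⟨C, hC⟩ := (isCompact_Icc (a := (0:ℝ)) (b := 1)).exists_bound_of_continuousOn
    hcd.continuousOn
  have hC0 : 0 ≤ C := le_trans (norm_nonneg _) (hC 0 ⟨le_refl _, zero_le_one⟩)
  refine ⟨C, hC0, fun t ht => hC t ht, fun t ht => ?_⟩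
  have := Convex.norm_image_sub_le_of_norm_deriv_le (s := Icc (0:ℝ) 1)
    (fun x _ => (hu.differentiable (by simp)).differentiableAt)
    (fun x hx => hC x hx) (convex_Icc 0 1) ⟨le_refl _, zero_le_one⟩ ht
  simpa [hu0, Real.norm_eq_abs, abs_of_nonneg ht.1] using this

lemma inv_mul_integrable (u : ℝ → ℝ) (hu : ContDiff ℝ (⊤:ℕ∞) u) (hu0 : u 0 = 0) :
    IntervalIntegrable (fun t => t⁻¹ * u t) volume 0 1 := by
  obtain ⟨C, hC0, -, hlin⟩ := bound_of_deriv u hu hu0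
  rw [intervalIntegrable_iff, uIoc_of_le zero_le_one]
  refine Integrable.mono' (integrable_const C)
    ((measurable_inv.aestronglyMeasurable.mul
      hu.continuous.measurable.aestronglyMeasurable)) ?_
  refine (ae_restrict_iff' measurableSet_Ioc).2 (Eventually.of_forall fun t ht => ?_)
  have ht0 : 0 < t := ht.1
  have := hlin t ⟨ht0.le, ht.2⟩
  rw [Real.norm_eq_abs, abs_mul, abs_inv, abs_of_pos ht0]
  rw [inv_mul_le_iff₀ ht0]
  nlinarith [abs_nonneg (u t)]

lemma tendsto_tail (q : ℝ → ℝ) (hq : IntervalIntegrable q volume 0 1) :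
    Tendsto (fun ε => ∫ t in ε..1, q t) (nhdsWithin 0 (Ioc (0:ℝ) 1))
      (nhds (∫ t in (0:ℝ)..1, q t)) := by
  have hIcc : IntegrableOn q (uIcc (0:ℝ) 1) volume := by
    rw [uIcc_of_le zero_le_one, integrableOn_Icc_iff_integrableOn_Ioc]
    rw [intervalIntegrable_iff, uIoc_of_le zero_le_one] at hq
    exact hq
  have hP : ContinuousOn (fun x => ∫ t in (0:ℝ)..x, q t) (uIcc (0:ℝ) 1) :=
    intervalIntegral.continuousOn_primitive_interval hIcc
  have h0 : (0:ℝ) ∈ uIcc (0:ℝ) 1 := by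
    rw [uIcc_of_le zero_le_one]; exact ⟨le_refl _, zero_le_one⟩
  have hPT : Tendsto (fun x => ∫ t in (0:ℝ)..x, q t) (nhdsWithin 0 (Ioc (0:ℝ) 1)) (nhds 0) := by
    have h1 : ContinuousWithinAt (fun x => ∫ t in (0:ℝ)..x, q t) (uIcc (0:ℝ) 1) 0 := hP 0 h0
    have h2 : Tendsto (fun x => ∫ t in (0:ℝ)..x, q t) (nhdsWithin 0 (uIcc (0:ℝ) 1))
        (nhds (∫ t in (0:ℝ)..(0:ℝ), q t)) := h1
    rw [intervalIntegral.integral_same] at h2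
    exact h2.mono_left (nhdsWithin_mono 0 (by rw [uIcc_of_le zero_le_one]; exact Ioc_subset_Icc_self))
  have hsplit : ∀ ε ∈ Ioc (0:ℝ) 1, (∫ t in ε..1, q t) = (∫ t in (0:ℝ)..1, q t) - ∫ t in (0:ℝ)..ε, q t := by
    intro ε hε
    have ha : IntervalIntegrable q volume 0 ε :=
      hq.mono_set (by rw [uIcc_of_le zero_le_one, uIcc_of_le hε.1.le]; exact Icc_subset_Icc le_rfl hε.2)
    have hb : IntervalIntegrable q volume ε 1 :=
      hq.mono_set (by rw [uIcc_of_le zero_le_one, uIcc_of_le hε.2]; exact Icc_subset_Icc hε.1.le le_rfl)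
    have := intervalIntegral.integral_add_adjacent_intervals ha hb
    linarith
  have hT : Tendsto (fun ε => (∫ t in (0:ℝ)..1, q t) - ∫ t in (0:ℝ)..ε, q t)
      (nhdsWithin 0 (Ioc (0:ℝ) 1)) (nhds ((∫ t in (0:ℝ)..1, q t) - 0)) :=
    tendsto_const_nhds.sub hPT
  rw [sub_zero] at hT
  refine hT.congr' ?_
  filter_upwards [self_mem_nhdsWithin] with ε hε
  exact (hsplit ε hε).symm

lemma step2 (u : ℝ → ℝ) (hu : ContDiff ℝ (⊤:ℕ∞) u) (hu0 : u 0 = 0) :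
    ∫ t in (0:ℝ)..1, t⁻¹ * u t = ∫ t in (0:ℝ)..1, (-Real.log t) * deriv u t := by
  obtain ⟨C, hC0, hCd, hlin⟩ := bound_of_deriv u hu hu0
  have hud : Differentiable ℝ u := hu.differentiable (by simp)
  have hcd : Continuous (deriv u) := hu.continuous_deriv (by exact_mod_cast le_top)
  have hq_int : IntervalIntegrable (fun t => t⁻¹ * u t) volume 0 1 :=
    inv_mul_integrable u hu hu0
  have hr_int : IntervalIntegrable (fun t => Real.log t * deriv u t) volume 0 1 :=
    IntervalIntegrable.mul_continuousOn log_intervalIntegrable hcd.continuousOn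
  -- integration by parts on [ε, 1]
  have hibp : ∀ ε ∈ Ioc (0:ℝ) 1,
      (∫ t in ε..1, t⁻¹ * u t) = -(Real.log ε * u ε) - ∫ t in ε..1, Real.log t * deriv u t := by
    intro ε hε
    have hpos : ∀ t ∈ uIcc ε 1, 0 < t := by
      intro t ht
      rw [uIcc_of_le hε.2] at ht
      exact lt_of_lt_of_le hε.1 ht.1
    have hderiv : ∀ t ∈ uIcc ε 1,
        HasDerivAt (fun s => Real.log s * u s) (t⁻¹ * u t + Real.log t * deriv u t) t := by
      intro t ht
      exact (Real.hasDerivAt_log (hpos t ht).ne').mul (hud t).hasDerivAt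
    have hint : IntervalIntegrable (fun t => t⁻¹ * u t + Real.log t * deriv u t) volume ε 1 := by
      apply ContinuousOn.intervalIntegrable
      apply ContinuousOn.add
      · exact (continuousOn_inv₀.mono (fun t ht => (hpos t ht).ne')).mul hu.continuous.continuousOn
      · exact (Real.continuousOn_log.mono (fun t ht => (hpos t ht).ne')).mul hcd.continuousOn
    have heq := intervalIntegral.integral_eq_sub_of_hasDerivAt hderiv hint
    rw [Real.log_one, zero_mul] at heq
    have hia : IntervalIntegrable (fun t => t⁻¹ * u t) volume ε 1 := by
      apply ContinuousOn.intervalIntegrable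
      exact (continuousOn_inv₀.mono (fun t ht => (hpos t ht).ne')).mul hu.continuous.continuousOn
    have hib : IntervalIntegrable (fun t => Real.log t * deriv u t) volume ε 1 := by
      apply ContinuousOn.intervalIntegrable
      exact (Real.continuousOn_log.mono (fun t ht => (hpos t ht).ne')).mul hcd.continuousOn
    rw [intervalIntegral.integral_add hia hib] at heq
    linarith
  set l := nhdsWithin (0:ℝ) (Ioc (0:ℝ) 1) with hl
  have hlne : l.NeBot := by
    rw [hl, ← mem_closure_iff_nhdsWithin_neBot, closure_Ioc (one_ne_zero).symm]
    exact ⟨le_refl _, zero_le_one⟩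
  have T1 : Tendsto (fun ε => ∫ t in ε..1, t⁻¹ * u t) l (nhds (∫ t in (0:ℝ)..1, t⁻¹ * u t)) :=
    tendsto_tail _ hq_int
  have T3 : Tendsto (fun ε => ∫ t in ε..1, Real.log t * deriv u t) l
      (nhds (∫ t in (0:ℝ)..1, Real.log t * deriv u t)) := tendsto_tail _ hr_int
  have T2 : Tendsto (fun ε => Real.log ε * u ε) l (nhds 0) := by
    have hlog : Tendsto (fun ε : ℝ => Real.log ε * ε) l (nhds 0) := by
      have := tendsto_log_mul_rpow_nhdsGT_zero (r := 1) one_pos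
      simp only [Real.rpow_one] at this
      exact this.mono_left (nhdsWithin_mono 0 Ioc_subset_Ioi_self)
    have habs : Tendsto (fun ε : ℝ => C * |Real.log ε * ε|) l (nhds 0) := by
      have := (hlog.abs).const_mul C
      simpa using this
    apply squeeze_zero_norm' _ habs
    filter_upwards [self_mem_nhdsWithin] with ε hε
    have hε0 : 0 < ε := hε.1
    have h1 : |u ε| ≤ C * ε := hlin ε ⟨hε0.le, hε.2⟩
    rw [Real.norm_eq_abs, abs_mul, abs_mul]
    calc |Real.log ε| * |u ε| ≤ |Real.log ε| * (C * ε) :=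
          mul_le_mul_of_nonneg_left h1 (abs_nonneg _)
      _ = C * (|Real.log ε| * |ε|) := by rw [abs_of_pos hε0]; ring
  have Tright : Tendsto (fun ε => -(Real.log ε * u ε) - ∫ t in ε..1, Real.log t * deriv u t) l
      (nhds (-(0:ℝ) - ∫ t in (0:ℝ)..1, Real.log t * deriv u t)) := (T2.neg).sub T3
  have Tleft : Tendsto (fun ε => ∫ t in ε..1, t⁻¹ * u t) l
      (nhds (-(0:ℝ) - ∫ t in (0:ℝ)..1, Real.log t * deriv u t)) := by
    refine Tright.congr' ?_
    filter_upwards [self_mem_nhdsWithin] with ε hε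
    exact (hibp ε hε).symm
  have := tendsto_nhds_unique T1 Tleft
  rw [this, neg_zero, zero_sub, ← intervalIntegral.integral_neg]
  congr 1
  funext t
  ring

lemma contDiff_key_top {F : Type} [NormedAddCommGroup F] [NormedSpace ℝ F] [CompleteSpace F]
    (c : ℝ → ℝ) (h : E3 → F) (hc : IntervalIntegrable c volume 0 1)
    (hh : ContDiff ℝ (⊤:ℕ∞) h) :
    ContDiff ℝ (⊤:ℕ∞) (fun y : E3 => ∫ t in (0:ℝ)..1, c t • h (t • y)) :=
  contDiff_infty.2 fun n => contDiff_key n c h hc hh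

/-- Lemma A.2 (iii), k = ∞: for cone-smooth `φ` with `φ(0) = 0`, the function
`y ↦ ∫₀¹ t⁻¹ φ(t • y) dt` (i.e. `∫₀^r r̂⁻¹ φ dr̂`) is cone-smooth. -/
theorem cone_smooth_radial_log_integral (φ : EuclideanSpace ℝ (Fin 3) → ℝ)
    (f g : EuclideanSpace ℝ (Fin 3) → ℝ)
    (hf : ContDiff ℝ (⊤ : ℕ∞) f) (hg : ContDiff ℝ (⊤ : ℕ∞) g)
    (hφ : ∀ y : EuclideanSpace ℝ (Fin 3), φ y = f y + ‖y‖ * g y)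
    (h0 : φ 0 = 0) :
    ∃ f₁ g₁ : EuclideanSpace ℝ (Fin 3) → ℝ,
      ContDiff ℝ (⊤ : ℕ∞) f₁ ∧ ContDiff ℝ (⊤ : ℕ∞) g₁ ∧
      ∀ y : EuclideanSpace ℝ (Fin 3),
        (∫ t in (0 : ℝ)..1, t⁻¹ * φ (t • y)) = f₁ y + ‖y‖ * g₁ y := by
  have hf0 : f 0 = 0 := by
    have := hφ 0
    rw [h0] at this
    simpa using this.symm
  have hDf : ContDiff ℝ (⊤:ℕ∞) (fderiv ℝ f) :=
    hf.fderiv_right (m := (⊤:ℕ∞)) (by rw [ENat.coe_top_add_one])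
  have hc₁ : IntervalIntegrable (fun t => -Real.log t) volume 0 1 :=
    IntervalIntegrable.neg log_intervalIntegrable
  set K : E3 → (E3 →L[ℝ] ℝ) :=
    fun y => ∫ t in (0:ℝ)..1, (-Real.log t) • fderiv ℝ f (t • y) with hKdef
  have hK : ContDiff ℝ (⊤:ℕ∞) K :=
    contDiff_key_top (fun t => -Real.log t) (fderiv ℝ f) hc₁ hDf
  refine ⟨fun y => K y y, fun y => ∫ t in (0:ℝ)..1, g (t • y), hK.clm_apply contDiff_id, ?_, ?_⟩
  · have := contDiff_key_top (fun _ => (1:ℝ)) g (intervalIntegrable_const) hg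
    simpa only [one_smul] using this
  intro y
  set u : ℝ → ℝ := fun t => f (t • y) with hudef
  have hu : ContDiff ℝ (⊤:ℕ∞) u := hf.comp (contDiff_id.smul contDiff_const)
  have hu0 : u 0 = 0 := by simp [hudef, hf0]
  have hder : ∀ t : ℝ, deriv u t = (fderiv ℝ f (t • y)) y := by
    intro t
    have h1 : HasDerivAt (fun s : ℝ => s • y) y t := by
      simpa using (hasDerivAt_id t).smul_const y
    have h2 : HasDerivAt u ((fderiv ℝ f (t • y)) y) t :=
      ((hf.differentiable (by simp) (t • y)).hasFDerivAt).comp_hasDerivAt t h1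
    exact h2.deriv
  have hA : IntervalIntegrable (fun t => t⁻¹ * u t) volume 0 1 :=
    inv_mul_integrable u hu hu0
  have hB : IntervalIntegrable (fun t => ‖y‖ * g (t • y)) volume 0 1 := by
    have h1 : Continuous (fun t : ℝ => t • y) := continuous_id.smul continuous_const
    exact (continuous_const.mul (hg.continuous.comp h1)).intervalIntegrable 0 1
  have hcong : (∫ t in (0:ℝ)..1, t⁻¹ * φ (t • y)) =
      ∫ t in (0:ℝ)..1, (t⁻¹ * u t + ‖y‖ * g (t • y)) := by
    apply intervalIntegral.integral_congr_ae
    filter_upwards [] with t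
    intro ht
    rw [uIoc_of_le zero_le_one] at ht
    have ht0 : 0 < t := ht.1
    rw [hφ (t • y)]
    have hn : ‖t • y‖ = t * ‖y‖ := by
      rw [norm_smul, Real.norm_eq_abs, abs_of_pos ht0]
    rw [hn, hudef]
    field_simp
  rw [hcong, intervalIntegral.integral_add hA hB, intervalIntegral.integral_const_mul]
  congr 1
  rw [step2 u hu hu0]
  have hint : IntervalIntegrable (fun t => (-Real.log t) • fderiv ℝ f (t • y)) volume 0 1 :=
    integ_aux hc₁ (((hDf.continuous)).comp (continuous_id.smul continuous_const))
  show (∫ t in (0:ℝ)..1, (-Real.log t) * deriv u t) = K y y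
  have hKy : K y = ∫ t in (0:ℝ)..1, (-Real.log t) • fderiv ℝ f (t • y) := rfl
  rw [hKy, ContinuousLinearMap.intervalIntegral_apply hint y]
  apply intervalIntegral.integral_congr
  intro t _
  show -Real.log t * deriv u t = (-Real.log t • fderiv ℝ f (t • y)) y
  rw [hder t]
  simp
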